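/- Let a, b ∈ ℝ with b > 0, and let ρ₁(a,b) be the 6×6 matrix (1/(2(a²+b²))) · [[a²,0,0,0,ab,0],[0,b²,0,0,0,ab],[0,0,0,0,0,0],[0,0,0,0,0,0],[ab,0,0,0,b²,0],[0,ab,0,0,0,a²]], regarded as a 2⊗3 state. Then the negativity of ρ₁(a,b) is N(ρ₁(a,b)) = (b√(b²+4a²) − b²)/(a²+b²), and hence N(ρ₁(a,b))² = (2b⁴ + 4a²b² − 2b³√(b²+4a²))/(a²+b²)². -/

import Mathlib

open Matrix BigOperators Polynomial
open scoped Kronecker ComplexOrder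

noncomputable section

/-- Squared Hilbert–Schmidt norm `‖C‖² = Tr(CᴴC)`. -/
def hsNormSq {d : Type*} [Fintype d] (C : Matrix d d ℂ) : ℝ :=
  (Matrix.trace (Cᴴ * C)).re

/-- The square root of a positive semidefinite matrix, as `Matrix.PosSemidef.sqrt` was defined
in the older Mathlib (removed since). -/
def Matrix.PosSemidef.sqrt {n : Type*} [Fintype n] [DecidableEq n] {𝕜 : Type*} [RCLike 𝕜]
    {A : Matrix n n 𝕜} (hA : A.PosSemidef) : Matrix n n 𝕜 :=
  hA.1.eigenvectorUnitary.1 * diagonal ((↑) ∘ (fun x : ℝ => Real.sqrt x) ∘ hA.1.eigenvalues) *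
  (star hA.1.eigenvectorUnitary : Matrix n n 𝕜)

/-- Trace norm `‖X‖₁ = Tr √(XᴴX)`. -/
def traceNorm {d : Type*} [Fintype d] [DecidableEq d] (X : Matrix d d ℂ) : ℝ :=
  ((Matrix.posSemidef_conjTranspose_mul_self X).sqrt.trace).re

/-- Partial transpose on the first factor: `ρ^Γ((i,k),(j,l)) = ρ((j,k),(i,l))`. -/
def ptranspose {m n : ℕ} (ρ : Matrix (Fin m × Fin n) (Fin m × Fin n) ℂ) :
    Matrix (Fin m × Fin n) (Fin m × Fin n) ℂ :=
  Matrix.of fun p q => ρ (q.1, p.2) (p.1, q.2)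

/-- Negativity `N(ρ) = (‖ρ^Γ‖₁ - 1)/(m-1)`. -/
def negativity {m n : ℕ} (ρ : Matrix (Fin m × Fin n) (Fin m × Fin n) ℂ) : ℝ :=
  (traceNorm (ptranspose ρ) - 1) / ((m : ℝ) - 1)

/-- `ψ` is an orthonormal basis of `ℂ^m` (an orthonormal family of `m` vectors). -/
def IsONB {m : ℕ} (ψ : Fin m → (Fin m → ℂ)) : Prop :=
  ∀ k l, (∑ i, star (ψ k i) * ψ l i) = if k = l then 1 else 0

/-- The rank-one projector `|v⟩⟨v|`. -/
def proj {m : ℕ} (v : Fin m → ℂ) : Matrix (Fin m) (Fin m) ℂ :=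
  Matrix.vecMulVec v (fun j => star (v j))

/-- The von Neumann measurement map
`Π^A(ρ) = ∑ k, (|ψ_k⟩⟨ψ_k| ⊗ I_n) ρ (|ψ_k⟩⟨ψ_k| ⊗ I_n)`. -/
def piA {m n : ℕ} (ψ : Fin m → (Fin m → ℂ))
    (ρ : Matrix (Fin m × Fin n) (Fin m × Fin n) ℂ) :
    Matrix (Fin m × Fin n) (Fin m × Fin n) ℂ :=
  ∑ k, (proj (ψ k) ⊗ₖ (1 : Matrix (Fin n) (Fin n) ℂ)) * ρ *
       (proj (ψ k) ⊗ₖ (1 : Matrix (Fin n) (Fin n) ℂ))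

/-- Geometric discord
`D(ρ) = (m/(m-1)) · inf over von Neumann measurements of ‖ρ - Π^A(ρ)‖²`. -/
def gd {m n : ℕ} (ρ : Matrix (Fin m × Fin n) (Fin m × Fin n) ℂ) : ℝ :=
  ((m : ℝ) / ((m : ℝ) - 1)) *
    ⨅ ψ : {ψ : Fin m → (Fin m → ℂ) // IsONB ψ}, hsNormSq (ρ - piA ψ.1 ρ)

/-- An `m ⊗ n` state: positive semidefinite with trace one. -/
def IsState {m n : ℕ} (ρ : Matrix (Fin m × Fin n) (Fin m × Fin n) ℂ) : Prop :=
  ρ.PosSemidef ∧ ρ.trace = 1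

/-- Reindex a `6 × 6` matrix by `Fin 2 × Fin 3` with the ordering
`(1,1),(1,2),(1,3),(2,1),(2,2),(2,3)`. -/
def ofM6 (M : Matrix (Fin 6) (Fin 6) ℂ) :
    Matrix (Fin 2 × Fin 3) (Fin 2 × Fin 3) ℂ :=
  Matrix.of fun p q =>
    M ⟨p.1.val * 3 + p.2.val, by have := p.1.isLt; have := p.2.isLt; omega⟩
      ⟨q.1.val * 3 + q.2.val, by have := q.1.isLt; have := q.2.isLt; omega⟩

/-- The family of states `ρ₁(a,b)`. -/
def rho1 (a b : ℝ) : Matrix (Fin 2 × Fin 3) (Fin 2 × Fin 3) ℂ :=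
  ofM6 ((1 / (2 * ((a : ℂ)^2 + (b : ℂ)^2))) •
    !![(a:ℂ)^2, 0, 0, 0, (a:ℂ)*(b:ℂ), 0;
       0, (b:ℂ)^2, 0, 0, 0, (a:ℂ)*(b:ℂ);
       0, 0, 0, 0, 0, 0;
       0, 0, 0, 0, 0, 0;
       (a:ℂ)*(b:ℂ), 0, 0, 0, (b:ℂ)^2, 0;
       0, (a:ℂ)*(b:ℂ), 0, 0, 0, (a:ℂ)^2])


def e23 : Fin 2 × Fin 3 ≃ Fin 6 where
  toFun p := ⟨p.1.val * 3 + p.2.val, by have := p.1.isLt; have := p.2.isLt; omega⟩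
  invFun k := (⟨k.val / 3, by omega⟩, ⟨k.val % 3, by omega⟩)
  left_inv := by decide
  right_inv := by decide

lemma psd_vecMulVec {n : ℕ} (v : Fin n → ℂ) : (Matrix.vecMulVec v (star v)).PosSemidef := by
  constructor
  · ext i j
    simp [Matrix.vecMulVec, Matrix.conjTranspose_apply, mul_comm]
  · exact (Matrix.posSemidef_vecMulVec_self_star v).2

lemma psd_smul_real {n : Type*} [Fintype n] {A : Matrix n n ℂ} (hA : A.PosSemidef) {c : ℝ}
    (hc : 0 ≤ c) : ((c : ℂ) • A).PosSemidef := by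
  constructor
  · have : ((c:ℂ) • A)ᴴ = (c:ℂ) • A := by
      rw [Matrix.conjTranspose_smul, hA.1]
      congr 1
      simp [Complex.star_def, Complex.conj_ofReal]
    exact this
  · exact (hA.smul (Complex.zero_le_real.mpr hc)).2

open scoped MatrixOrder in
lemma Matrix.PosSemidef.eq_sqrt_of_sq_eq {n : Type*} [Fintype n] [DecidableEq n]
    {S : Matrix n n ℂ} (hS : S.PosSemidef) (A : Matrix n n ℂ) {hA : A.PosSemidef}
    (h : S ^ 2 = A) : S = hA.sqrt := by
  have h1 : hA.sqrt = cfc Real.sqrt A := by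
    rw [hA.1.cfc_eq]
    simp [Matrix.PosSemidef.sqrt, Matrix.IsHermitian.cfc, Unitary.conjStarAlgAut_apply]
  rw [h1, ← cfcₙ_eq_cfc, ← CFC.sqrt_eq_real_sqrt A hA.nonneg]
  exact (CFC.sqrt_unique (by rw [← pow_two]; exact h) hS.nonneg).symm

section vec6
variable {α : Type*} (x0 x1 x2 x3 x4 x5 : α)
lemma v6_0 : ![x0,x1,x2,x3,x4,x5] 0 = x0 := rfl
lemma v6_1 : ![x0,x1,x2,x3,x4,x5] 1 = x1 := rfl
lemma v6_2 : ![x0,x1,x2,x3,x4,x5] 2 = x2 := rfl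
lemma v6_3 : ![x0,x1,x2,x3,x4,x5] 3 = x3 := rfl
lemma v6_4 : ![x0,x1,x2,x3,x4,x5] 4 = x4 := rfl
lemma v6_5 : ![x0,x1,x2,x3,x4,x5] 5 = x5 := rfl
lemma v6_m0 (h : 0 < 6) : ![x0,x1,x2,x3,x4,x5] ⟨0,h⟩ = x0 := rfl
lemma v6_m1 (h : 1 < 6) : ![x0,x1,x2,x3,x4,x5] ⟨1,h⟩ = x1 := rfl
lemma v6_m2 (h : 2 < 6) : ![x0,x1,x2,x3,x4,x5] ⟨2,h⟩ = x2 := rfl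
lemma v6_m3 (h : 3 < 6) : ![x0,x1,x2,x3,x4,x5] ⟨3,h⟩ = x3 := rfl
lemma v6_m4 (h : 4 < 6) : ![x0,x1,x2,x3,x4,x5] ⟨4,h⟩ = x4 := rfl
lemma v6_m5 (h : 5 < 6) : ![x0,x1,x2,x3,x4,x5] ⟨5,h⟩ = x5 := rfl
end vec6

lemma fv2_0 : ((0 : Fin 2) : ℕ) = 0 := rfl
lemma fv2_1 : ((1 : Fin 2) : ℕ) = 1 := rfl
lemma fv3_0 : ((0 : Fin 3) : ℕ) = 0 := rfl
lemma fv3_1 : ((1 : Fin 3) : ℕ) = 1 := rfl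
lemma fv3_2 : ((2 : Fin 3) : ℕ) = 2 := rfl
lemma fvm (n i : ℕ) (h : i < n) : ((⟨i, h⟩ : Fin n) : ℕ) = i := rfl

def X0 (a b : ℝ) : Matrix (Fin 6) (Fin 6) ℂ :=
  !![(a:ℂ)^2, 0, 0, 0, 0, 0;
     0, (b:ℂ)^2, 0, (a:ℂ)*(b:ℂ), 0, 0;
     0, 0, 0, 0, (a:ℂ)*(b:ℂ), 0;
     0, (a:ℂ)*(b:ℂ), 0, 0, 0, 0;
     0, 0, (a:ℂ)*(b:ℂ), 0, (b:ℂ)^2, 0;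
     0, 0, 0, 0, 0, (a:ℂ)^2]

def Tm (a b s : ℝ) : Matrix (Fin 6) (Fin 6) ℂ :=
  !![(s:ℂ)*(a:ℂ)^2, 0, 0, 0, 0, 0;
     0, (b:ℂ)^3 + 2*(a:ℂ)^2*(b:ℂ), 0, (a:ℂ)*(b:ℂ)^2, 0, 0;
     0, 0, 2*(a:ℂ)^2*(b:ℂ), 0, (a:ℂ)*(b:ℂ)^2, 0;
     0, (a:ℂ)*(b:ℂ)^2, 0, 2*(a:ℂ)^2*(b:ℂ), 0, 0;
     0, 0, (a:ℂ)*(b:ℂ)^2, 0, (b:ℂ)^3 + 2*(a:ℂ)^2*(b:ℂ), 0;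
     0, 0, 0, 0, 0, (s:ℂ)*(a:ℂ)^2]

lemma ofM6_eq (M : Matrix (Fin 6) (Fin 6) ℂ) : ofM6 M = M.submatrix e23 e23 := rfl

set_option maxHeartbeats 1000000 in
lemma hPT (a b : ℝ) : ptranspose (rho1 a b) =
    ofM6 ((1 / (2 * ((a : ℂ)^2 + (b : ℂ)^2))) • X0 a b) := by
  ext ⟨i, k⟩ ⟨j, l⟩
  fin_cases i <;> fin_cases j <;> fin_cases k <;> fin_cases l <;>
    simp only [ptranspose, rho1, ofM6, X0, Matrix.smul_apply, smul_eq_mul, Matrix.of_apply,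
      fv2_0, fv2_1, fv3_0, fv3_1, fv3_2, fvm, Nat.reduceMul, Nat.reduceAdd, Fin.isValue,
      v6_0, v6_1, v6_2, v6_3, v6_4, v6_5, v6_m0, v6_m1, v6_m2, v6_m3, v6_m4, v6_m5] <;>
    ring

set_option maxHeartbeats 1000000 in
lemma hX0H (a b : ℝ) : (X0 a b)ᴴ = X0 a b := by
  ext i j
  fin_cases i <;> fin_cases j <;>
    simp only [X0, Matrix.conjTranspose_apply, Matrix.of_apply, _root_.map_mul, _root_.map_pow, _root_.map_zero,
      _root_.map_one, Complex.star_def, Complex.conj_ofReal,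
      v6_0, v6_1, v6_2, v6_3, v6_4, v6_5, v6_m0, v6_m1, v6_m2, v6_m3, v6_m4, v6_m5] <;>
    ring

set_option maxHeartbeats 1000000 in
lemma hTT (a b s : ℝ) (h : s^2 = b^2 + 4*a^2) :
    Tm a b s * Tm a b s = (((b^2 + 4*a^2 : ℝ)) : ℂ) • (X0 a b * X0 a b) := by
  have hC : (s:ℂ)^2 = (b:ℂ)^2 + 4*(a:ℂ)^2 := by
    have := congrArg (Complex.ofReal) h
    push_cast at this
    exact this
  ext i j
  fin_cases i <;> fin_cases j <;>
    simp only [Tm, X0, Matrix.mul_apply, Fin.sum_univ_six, Matrix.smul_apply, smul_eq_mul,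
      Matrix.of_apply, v6_0, v6_1, v6_2, v6_3, v6_4, v6_5,
      v6_m0, v6_m1, v6_m2, v6_m3, v6_m4, v6_m5]
  all_goals push_cast
  all_goals try ring
  all_goals linear_combination (a:ℂ)^4 * hC

set_option maxHeartbeats 1000000 in
lemma hTdec (a b s : ℝ) : Tm a b s =
    Matrix.diagonal (fun i => ((![s*a^2, 2*a^2*b, a^2*b, a^2*b, 2*a^2*b, s*a^2] i : ℝ) : ℂ))
    + (b:ℂ) • Matrix.vecMulVec ![0,(b:ℂ),0,(a:ℂ),0,0] (star ![0,(b:ℂ),0,(a:ℂ),0,0])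
    + (b:ℂ) • Matrix.vecMulVec ![0,0,(a:ℂ),0,(b:ℂ),0] (star ![0,0,(a:ℂ),0,(b:ℂ),0]) := by
  ext i j
  fin_cases i <;> fin_cases j <;>
    simp only [Tm, Matrix.vecMulVec, Matrix.diagonal, Matrix.add_apply, Matrix.smul_apply,
      smul_eq_mul, Matrix.of_apply, Pi.star_apply, Complex.star_def, Complex.conj_ofReal,
      map_zero, Fin.mk.injEq, v6_0, v6_1, v6_2, v6_3, v6_4, v6_5,
      v6_m0, v6_m1, v6_m2, v6_m3, v6_m4, v6_m5]
  all_goals try norm_num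
  all_goals push_cast
  all_goals try ring

lemma hTpsd (a b s : ℝ) (hb : 0 < b) (hs : 0 ≤ s) : (Tm a b s).PosSemidef := by
  rw [hTdec a b s]
  refine (Matrix.PosSemidef.add (Matrix.PosSemidef.add ?_ ?_) ?_)
  · refine Matrix.posSemidef_diagonal_iff.mpr fun i => Complex.zero_le_real.mpr ?_
    fin_cases i <;>
      simp only [v6_0, v6_1, v6_2, v6_3, v6_4, v6_5, v6_m0, v6_m1, v6_m2, v6_m3, v6_m4, v6_m5] <;>
      nlinarith [sq_nonneg a, sq_nonneg b, hb.le, hs]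
  · exact psd_smul_real (psd_vecMulVec _) hb.le
  · exact psd_smul_real (psd_vecMulVec _) hb.le

set_option maxHeartbeats 1000000 in
theorem stmt10 (a b : ℝ) (hb : 0 < b) :
    negativity (rho1 a b) =
      (b * Real.sqrt (b ^ 2 + 4 * a ^ 2) - b ^ 2) / (a ^ 2 + b ^ 2) ∧
    negativity (rho1 a b) ^ 2 =
      (2 * b ^ 4 + 4 * a ^ 2 * b ^ 2 -
        2 * b ^ 3 * Real.sqrt (b ^ 2 + 4 * a ^ 2)) / (a ^ 2 + b ^ 2) ^ 2 := by
  have ha2b2 : (0:ℝ) < a^2 + b^2 := by positivity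
  set s : ℝ := Real.sqrt (b^2 + 4*a^2) with hsdef
  have hs2 : s^2 = b^2 + 4*a^2 := Real.sq_sqrt (by positivity)
  have hspos : 0 < s := Real.sqrt_pos.mpr (by positivity)
  set cc : ℂ := 1 / (2 * ((a:ℂ)^2 + (b:ℂ)^2)) with hccdef
  set r : ℝ := 1 / (2 * (a^2+b^2) * s) with hrdef
  have hCab : ((a:ℂ)^2 + (b:ℂ)^2) = ((a^2+b^2 : ℝ) : ℂ) := by push_cast; ring
  have hCabne : ((a:ℂ)^2 + (b:ℂ)^2) ≠ 0 := by
    rw [hCab]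
    exact_mod_cast ha2b2.ne'
  set S : Matrix (Fin 2 × Fin 3) (Fin 2 × Fin 3) ℂ := ofM6 ((r:ℂ) • Tm a b s) with hSdef
  have hrnn : 0 ≤ r := le_of_lt (by
    rw [hrdef]
    positivity)
  have hSpsd : S.PosSemidef := by
    rw [hSdef, ofM6_eq]
    exact (Matrix.posSemidef_submatrix_equiv e23).mpr
      (psd_smul_real (hTpsd a b s hb hspos.le) hrnn)
  have hXHer : ((cc • X0 a b))ᴴ = cc • X0 a b := by
    rw [Matrix.conjTranspose_smul, hX0H]
    congr 1
    rw [hccdef, hCab]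
    simp [Complex.star_def, map_div₀, Complex.conj_ofReal]
  have hscalar : ((r:ℂ)) * (r:ℂ) * (((b^2 + 4*a^2 : ℝ)):ℂ) = cc * cc := by
    have hr2 : r * r * (b^2 + 4*a^2) = (1/(2*(a^2+b^2))) * (1/(2*(a^2+b^2))) := by
      rw [← hs2, hrdef]
      field_simp
    have hcast : ((r:ℂ)) * (r:ℂ) * (((b^2 + 4*a^2 : ℝ)):ℂ)
        = ((r * r * (b^2 + 4*a^2) : ℝ) : ℂ) := by push_cast; ring
    rw [hcast, hr2, hccdef, hCab]
    push_cast
    ring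
  have hsq : S ^ 2 = (ptranspose (rho1 a b))ᴴ * (ptranspose (rho1 a b)) := by
    rw [pow_two, hSdef, hPT a b, ofM6_eq, ofM6_eq, Matrix.conjTranspose_submatrix]
    rw [← hccdef] at *
    rw [hXHer, Matrix.submatrix_mul_equiv, Matrix.submatrix_mul_equiv]
    congr 1
    rw [Matrix.smul_mul, Matrix.mul_smul, hTT a b s hs2, smul_smul, smul_smul,
      Matrix.smul_mul, Matrix.mul_smul, smul_smul]
    rw [hscalar]
  have hsqrtEq : S = (Matrix.posSemidef_conjTranspose_mul_self (ptranspose (rho1 a b))).sqrt :=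
    hSpsd.eq_sqrt_of_sq_eq _ hsq
  have htrsub : ∀ M : Matrix (Fin 6) (Fin 6) ℂ, (M.submatrix e23 e23).trace = M.trace := by
    intro M
    simp only [Matrix.trace, Matrix.diag, Matrix.submatrix_apply]
    exact Equiv.sum_comp e23 (fun i => M i i)
  have htr : S.trace = ((r * (2*s*a^2 + 2*b^3 + 8*a^2*b) : ℝ) : ℂ) := by
    rw [hSdef, ofM6_eq, htrsub, Matrix.trace_smul]
    have htm : (Tm a b s).trace = ((2*s*a^2 + 2*b^3 + 8*a^2*b : ℝ) : ℂ) := by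
      simp only [Matrix.trace, Matrix.diag, Fin.sum_univ_six, Tm, Matrix.of_apply,
        v6_0, v6_1, v6_2, v6_3, v6_4, v6_5]
      push_cast
      ring
    rw [htm, smul_eq_mul]
    push_cast
    ring
  have hN : negativity (rho1 a b) = (b*s - b^2)/(a^2+b^2) := by
    simp only [negativity, traceNorm, ← hsqrtEq, htr, Complex.ofReal_re]
    have hkey : r * (2*s*a^2 + 2*b^3 + 8*a^2*b) = (a^2 + b*s)/(a^2+b^2) := by
      have h1 : 2*s*a^2 + 2*b^3 + 8*a^2*b = 2*s*a^2 + 2*b*s^2 := by rw [hs2]; ring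
      rw [h1, hrdef]
      field_simp
    rw [hkey]
    norm_num
    try field_simp
    try ring
  refine ⟨hN, ?_⟩
  rw [hN, div_pow]
  congr 1
  linear_combination b^2 * hs2

end
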